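/- Let {φ_n} be convex functions ℝ^d → ℝ with φ_n(0) = 0 and ∂φ_n(ℝ^d) ⊆ S for a compact set S ⊂ ℝ^d. Let K ⊂ ℝ^d be compact, K' compact with K ⊂ Int(K'), and suppose φ_n → φ uniformly on K' for a convex φ. Then ∂φ(K) ⊆ S, and for every δ > 0 there exists n₀ such that ∂φ_n(K) ⊆ ∪_{x ∈ ∂φ(K)} B_δ(x) for all n ≥ n₀. -/

import Mathlib

open scoped RealInnerProductSpace
open Filter
open scoped Topology

noncomputable section

abbrev E (d : ℕ) : Type := EuclideanSpace ℝ (Fin d)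

/-- Subdifferential of a real-valued function at a point. -/
def subdiffR {d : ℕ} (f : E d → ℝ) (x : E d) : Set (E d) :=
  {ξ | ∀ y : E d, f x + ⟪ξ, y - x⟫ ≤ f y}

/-- Subdifferential of an `EReal`-valued function at a point. -/
def subdiffE {d : ℕ} (f : E d → EReal) (x : E d) : Set (E d) :=
  {ξ | ∀ y : E d, f x + ((⟪ξ, y - x⟫ : ℝ) : EReal) ≤ f y}

/-- Convexity of an `EReal`-valued function. -/
def ConvexE {d : ℕ} (f : E d → EReal) : Prop :=
  ∀ x y : E d, ∀ a b : ℝ, 0 ≤ a → 0 ≤ b → a + b = 1 →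
    f (a • x + b • y) ≤ (a : EReal) * f x + (b : EReal) * f y

lemma convexCont {d : ℕ} (f : E d → ℝ) (hf : ConvexOn ℝ Set.univ f) : Continuous f := by
  have := hf.continuousOn isOpen_univ
  exact continuousOn_univ.mp this

lemma localMin {d : ℕ} (f : E d → ℝ)
    (hf : ∀ x y : E d, ∀ a b : ℝ, 0 ≤ a → 0 ≤ b → a + b = 1 →
      f (a • x + b • y) ≤ a * f x + b * f y)
    (x : E d) (r : ℝ) (hr : 0 < r) (hmin : ∀ y ∈ Metric.ball x r, f x ≤ f y) :
    ∀ y : E d, f x ≤ f y := by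
  intro y
  rcases eq_or_ne y x with rfl | hne
  · exact le_refl _
  have hpos : 0 < ‖y - x‖ := by
    rw [norm_pos_iff]; exact sub_ne_zero.mpr hne
  set t : ℝ := min (1/2) (r / (2 * ‖y - x‖)) with ht
  have ht0 : 0 < t := lt_min (by norm_num) (div_pos hr (by positivity))
  have ht1 : t ≤ 1/2 := min_le_left _ _
  have htr : t * ‖y - x‖ < r := by
    have h1 : t ≤ r / (2 * ‖y - x‖) := min_le_right _ _
    have h2 : t * ‖y - x‖ ≤ (r / (2 * ‖y - x‖)) * ‖y - x‖ :=
      mul_le_mul_of_nonneg_right h1 hpos.le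
    have h3 : (r / (2 * ‖y - x‖)) * ‖y - x‖ = r / 2 := by field_simp
    linarith
  set z : E d := x + t • (y - x) with hz
  have hzmem : z ∈ Metric.ball x r := by
    rw [Metric.mem_ball, dist_eq_norm]
    have : z - x = t • (y - x) := by rw [hz]; abel
    rw [this, norm_smul, Real.norm_eq_abs, abs_of_pos ht0]
    exact htr
  have hzconv : z = (1 - t) • x + t • y := by
    rw [hz]; module
  have h1 : f x ≤ f z := hmin z hzmem
  have h2 : f z ≤ (1 - t) * f x + t * f y := by
    rw [hzconv]; exact hf x y (1 - t) t (by linarith) (le_of_lt ht0) (by ring)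
  nlinarith

lemma quadSub {d : ℕ} (f : E d → ℝ) (hf : ConvexOn ℝ Set.univ f) (x s : E d) (τ : ℝ)
    (hτ : 0 ≤ τ) (h : ∀ y : E d, f x + ⟪s, y - x⟫ - τ * ‖y - x‖^2 ≤ f y) :
    s ∈ subdiffR f x := by
  intro y
  rcases eq_or_ne y x with rfl | hne
  · simp
  refine le_of_forall_pos_le_add (fun ε hε => ?_)
  set c : ℝ := τ * ‖y - x‖^2 with hc
  have hc0 : 0 ≤ c := by positivity
  set t : ℝ := min 1 (ε / (c + 1)) with htdef
  have ht0 : 0 < t := lt_min one_pos (div_pos hε (by linarith))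
  have ht1 : t ≤ 1 := min_le_left _ _
  have hte : t * (c + 1) ≤ ε := by
    have := min_le_right 1 (ε / (c + 1))
    rw [← le_div_iff₀ (by linarith : (0:ℝ) < c + 1)]
    exact this
  set z : E d := x + t • (y - x) with hz
  have hz1 : z - x = t • (y - x) := by rw [hz]; abel
  have hinner : ⟪s, z - x⟫ = t * ⟪s, y - x⟫ := by rw [hz1, real_inner_smul_right]
  have hnorm : ‖z - x‖^2 = t^2 * ‖y - x‖^2 := by
    rw [hz1, norm_smul, Real.norm_eq_abs, mul_pow, sq_abs]
  have hzconv : z = (1 - t) • x + t • y := by rw [hz]; module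
  have hconv2 : f z ≤ (1 - t) * f x + t * f y := by
    rw [hzconv]
    have := hf.2 (Set.mem_univ x) (Set.mem_univ y) (by linarith : (0:ℝ) ≤ 1 - t)
      ht0.le (by ring)
    simpa [smul_eq_mul] using this
  have hlow := h z
  rw [hinner, hnorm] at hlow
  have key : t * (f x + ⟪s, y - x⟫) ≤ t * f y + τ * t^2 * ‖y - x‖^2 := by nlinarith
  have ht2 : τ * t^2 * ‖y - x‖^2 ≤ t * ε := by nlinarith [sq_nonneg t]
  nlinarith

lemma localToGlobalE {d : ℕ} (φ : E d → EReal) (hφ : ConvexE φ) (x : E d) (r : ℝ)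
    (hr : 0 < r) (hfinB : ∀ z ∈ Metric.ball x r, φ z ≠ ⊤ ∧ φ z ≠ ⊥) (s : E d)
    (hloc : ∀ y ∈ Metric.ball x r, (φ x).toReal + ⟪s, y - x⟫ ≤ (φ y).toReal) :
    s ∈ subdiffE φ x := by
  have hxB : x ∈ Metric.ball x r := Metric.mem_ball_self hr
  have hxfin := hfinB x hxB
  have hxcoe : ((φ x).toReal : EReal) = φ x := EReal.coe_toReal hxfin.1 hxfin.2
  set a : ℝ := (φ x).toReal with hadef
  intro y
  by_cases hyB : y ∈ Metric.ball x r
  · have hyfin := hfinB y hyB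
    have hycoe : ((φ y).toReal : EReal) = φ y := EReal.coe_toReal hyfin.1 hyfin.2
    have := hloc y hyB
    rw [← hxcoe, ← hycoe, ← EReal.coe_add, EReal.coe_le_coe_iff]
    exact this
  · have hne : y ≠ x := fun h => hyB (h ▸ hxB)
    have hpos : 0 < ‖y - x‖ := by rw [norm_pos_iff]; exact sub_ne_zero.mpr hne
    set t : ℝ := min (1/2) (r / (2 * ‖y - x‖)) with htdef
    have ht0 : 0 < t := lt_min (by norm_num) (div_pos hr (by positivity))
    have ht1 : t ≤ 1/2 := min_le_left _ _
    have htr : t * ‖y - x‖ < r := by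
      have h1 : t ≤ r / (2 * ‖y - x‖) := min_le_right _ _
      have h2 : t * ‖y - x‖ ≤ (r / (2 * ‖y - x‖)) * ‖y - x‖ :=
        mul_le_mul_of_nonneg_right h1 hpos.le
      have h3 : (r / (2 * ‖y - x‖)) * ‖y - x‖ = r / 2 := by field_simp
      linarith
    set z : E d := (1 - t) • x + t • y with hzdef
    have hzx : z - x = t • (y - x) := by rw [hzdef]; module
    have hzB : z ∈ Metric.ball x r := by
      rw [Metric.mem_ball, dist_eq_norm, show z - x = t • (y - x) from hzx, norm_smul,
        Real.norm_eq_abs, abs_of_pos ht0]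
      exact htr
    have hzfin := hfinB z hzB
    have hzcoe : ((φ z).toReal : EReal) = φ z := EReal.coe_toReal hzfin.1 hzfin.2
    set e : ℝ := (φ z).toReal with hedef
    have hconv := hφ x y (1 - t) t (by linarith) ht0.le (by ring)
    rw [← hzdef, ← hxcoe] at hconv
    have hlocz := hloc z hzB
    rw [hzx, real_inner_smul_right] at hlocz
    rcases eq_or_ne (φ y) ⊤ with hyt | hyt
    · rw [hyt]; exact le_top
    rcases eq_or_ne (φ y) ⊥ with hyb | hyb
    · exfalso
      rw [hyb, EReal.mul_bot_of_pos (by exact_mod_cast ht0), EReal.add_bot] at hconv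
      have : φ z = ⊥ := le_bot_iff.mp hconv
      exact hzfin.2 this
    have hycoe : ((φ y).toReal : EReal) = φ y := EReal.coe_toReal hyt hyb
    set b : ℝ := (φ y).toReal with hbdef
    rw [← hycoe, ← hzcoe, ← EReal.coe_mul, ← EReal.coe_mul, ← EReal.coe_add,
      EReal.coe_le_coe_iff] at hconv
    have : a + ⟪s, y - x⟫ ≤ b := by nlinarith
    rw [← hxcoe, ← hycoe, ← EReal.coe_add, EReal.coe_le_coe_iff]
    exact this

lemma sqConv {d : ℕ} (u x y : E d) (a b : ℝ) (ha : 0 ≤ a) (hb : 0 ≤ b) (hab : a + b = 1) :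
    ‖a • x + b • y - u‖^2 ≤ a * ‖x - u‖^2 + b * ‖y - u‖^2 := by
  have hcomb : a • x + b • y - u = a • (x - u) + b • (y - u) := by
    have key : a • x + b • y - u = a • (x - u) + b • (y - u) + ((a + b) • u - u) := by
      module
    rw [key, hab, one_smul, sub_self, add_zero]
  rw [hcomb]
  set v := x - u
  set w := y - u
  have hexp : ‖a • v + b • w‖^2 = ‖a • v‖^2 + 2 * ⟪a • v, b • w⟫ + ‖b • w‖^2 :=
    norm_add_sq_real _ _
  have h1 : ‖a • v‖^2 = a^2 * ‖v‖^2 := by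
    rw [norm_smul, Real.norm_eq_abs, mul_pow, sq_abs]
  have h2 : ‖b • w‖^2 = b^2 * ‖w‖^2 := by
    rw [norm_smul, Real.norm_eq_abs, mul_pow, sq_abs]
  have h3 : ⟪a • v, b • w⟫ = a * b * ⟪v, w⟫ := by
    rw [real_inner_smul_left, real_inner_smul_right]; ring
  have h4 : ⟪v, w⟫ ≤ ‖v‖ * ‖w‖ := real_inner_le_norm v w
  rw [hexp, h1, h2, h3]
  nlinarith [sq_nonneg (‖v‖ - ‖w‖), norm_nonneg v, norm_nonneg w, mul_nonneg ha hb]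

lemma part1core {d : ℕ} (φn : ℕ → E d → ℝ)
    (hconv : ∀ n, ConvexOn ℝ Set.univ (φn n))
    (S : Set (E d)) (hS : IsCompact S) (hsub : ∀ n x, subdiffR (φn n) x ⊆ S)
    (K' : Set (E d)) (φ : E d → EReal)
    (hfin : ∀ u ∈ K', φ u ≠ ⊤ ∧ φ u ≠ ⊥)
    (hunif : ∀ ε > (0 : ℝ), ∃ N : ℕ, ∀ n ≥ N, ∀ u ∈ K', |φn n u - (φ u).toReal| ≤ ε)
    (u : E d) (r : ℝ) (hr : 0 < r) (hball : Metric.closedBall u r ⊆ K')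
    (ξ : E d) (hξ : ξ ∈ subdiffE φ u) : ξ ∈ S := by
  rw [← hS.isClosed.closure_eq, Metric.mem_closure_iff]
  intro ε hε
  set τ : ℝ := ε / (4 * r) with hτdef
  have hτ : 0 < τ := div_pos hε (by positivity)
  set ε' : ℝ := τ * r^2 / 4 with hε'def
  have hε' : 0 < ε' := by positivity
  obtain ⟨N, hN⟩ := hunif ε' hε'
  have herr : ∀ w ∈ Metric.closedBall u r, |φn N w - (φ w).toReal| ≤ ε' :=
    fun w hw => hN N le_rfl w (hball hw)
  have huB : u ∈ Metric.closedBall u r := Metric.mem_closedBall_self hr.le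
  have hufin := hfin u (hball huB)
  set a : ℝ := (φ u).toReal with hadef
  have hucoe : ((a : ℝ) : EReal) = φ u := EReal.coe_toReal hufin.1 hufin.2
  have hsg : ∀ w ∈ Metric.closedBall u r, a + ⟪ξ, w - u⟫ ≤ (φ w).toReal := by
    intro w hw
    have hwfin := hfin w (hball hw)
    have hwcoe : (((φ w).toReal : ℝ) : EReal) = φ w := EReal.coe_toReal hwfin.1 hwfin.2
    have := hξ w
    rw [← hucoe, ← hwcoe, ← EReal.coe_add, EReal.coe_le_coe_iff] at this
    exact this
  set g : E d → ℝ := fun y => φn N y - ⟪ξ, y⟫ + τ * ‖y - u‖^2 with hgdef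
  have hgcont : Continuous g := by
    apply Continuous.add
    · exact (convexCont _ (hconv N)).sub (continuous_const.inner continuous_id)
    · exact continuous_const.mul ((continuous_id.sub continuous_const).norm.pow 2)
  obtain ⟨x, hxB, hxmin⟩ := (isCompact_closedBall u r).exists_isMinOn
    ⟨u, huB⟩ hgcont.continuousOn
  have hmin : ∀ y ∈ Metric.closedBall u r, g x ≤ g y := fun y hy => hxmin hy
  have hgu : g u = φn N u - ⟪ξ, u⟫ := by simp [hgdef]
  have c1 : (φ x).toReal - ε' ≤ φn N x := by
    have := abs_le.mp (herr x hxB); linarith [this.1]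
  have c2 : a + ⟪ξ, x - u⟫ ≤ (φ x).toReal := hsg x hxB
  have c3 : φn N u ≤ a + ε' := by
    have := abs_le.mp (herr u huB); linarith [this.2]
  have hinn : ⟪ξ, x - u⟫ = ⟪ξ, x⟫ - ⟪ξ, u⟫ := inner_sub_right _ _ _
  have hgxu : g x ≤ g u := hmin u huB
  have hq : τ * ‖x - u‖^2 ≤ 2 * ε' := by
    have : φn N x - ⟪ξ, x⟫ + τ * ‖x - u‖^2 ≤ φn N u - ⟪ξ, u⟫ := by
      rw [← hgu]; exact hgxu
    linarith
  have hxu2 : ‖x - u‖^2 ≤ r^2 / 2 := by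
    have h2e : 2 * ε' = τ * r^2 / 2 := by rw [hε'def]; ring
    rw [h2e] at hq
    nlinarith
  have hxu : ‖x - u‖ < r := by nlinarith [norm_nonneg (x - u)]
  have hgconv : ∀ x' y' : E d, ∀ p q : ℝ, 0 ≤ p → 0 ≤ q → p + q = 1 →
      g (p • x' + q • y') ≤ p * g x' + q * g y' := by
    intro x' y' p q hp hq hpq
    have hφconv : φn N (p • x' + q • y') ≤ p * φn N x' + q * φn N y' := by
      have := (hconv N).2 (Set.mem_univ x') (Set.mem_univ y') hp hq hpq
      simpa [smul_eq_mul] using this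
    have hlin : ⟪ξ, p • x' + q • y'⟫ = p * ⟪ξ, x'⟫ + q * ⟪ξ, y'⟫ := by
      rw [inner_add_right, real_inner_smul_right, real_inner_smul_right]
    have hquad := sqConv u x' y' p q hp hq hpq
    simp only [hgdef]
    rw [hlin]
    nlinarith [hτ.le]
  have hgmin : ∀ y : E d, g x ≤ g y := by
    apply localMin g hgconv x (r - ‖x - u‖) (by linarith)
    intro y hy
    apply hmin
    rw [Metric.mem_closedBall, dist_eq_norm]
    have h1 : ‖y - x‖ < r - ‖x - u‖ := by rw [← dist_eq_norm]; exact hy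
    have h2 : ‖y - u‖ ≤ ‖y - x‖ + ‖x - u‖ := norm_sub_le_norm_sub_add_norm_sub y x u
    linarith
  set s : E d := ξ - (2 * τ) • (x - u) with hsdef
  have hsub' : s ∈ subdiffR (φn N) x := by
    apply quadSub _ (hconv N) _ _ τ hτ.le
    intro y
    have hg := hgmin y
    have hid : ‖y - u‖^2 = ‖y - x‖^2 + 2 * ⟪y - x, x - u⟫ + ‖x - u‖^2 := by
      have : y - u = (y - x) + (x - u) := by abel
      rw [this]; exact norm_add_sq_real _ _
    have hsin : ⟪s, y - x⟫ = ⟪ξ, y - x⟫ - 2 * τ * ⟪y - x, x - u⟫ := by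
      rw [hsdef, inner_sub_left, real_inner_smul_left, real_inner_comm (x - u)]
    have hξin : ⟪ξ, y - x⟫ = ⟪ξ, y⟫ - ⟪ξ, x⟫ := inner_sub_right _ _ _
    have hgineq : φn N x - ⟪ξ, x⟫ + τ * ‖x - u‖^2 ≤ φn N y - ⟪ξ, y⟫ + τ * ‖y - u‖^2 := hg
    rw [hid] at hgineq
    rw [hsin, hξin]
    linarith
  have hsS : s ∈ S := hsub N x hsub'
  refine ⟨s, hsS, ?_⟩
  have hxur : ‖x - u‖ ≤ r := by
    have := Metric.mem_closedBall.mp hxB; rwa [dist_eq_norm] at this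
  have hd : dist ξ s = 2 * τ * ‖x - u‖ := by
    rw [dist_eq_norm, hsdef]
    have : ξ - (ξ - (2 * τ) • (x - u)) = (2 * τ) • (x - u) := by abel
    rw [this, norm_smul, Real.norm_eq_abs, abs_of_pos (by linarith)]
  rw [hd]
  have hb : 2 * τ * ‖x - u‖ ≤ 2 * τ * r := by nlinarith
  have hτr : 2 * τ * r = ε / 2 := by rw [hτdef]; field_simp; ring
  linarith

/-- Under the same setup as uniform convergence of convex functions on `K'`
(with `K ⊆ Int K'`), the limit's subdifferential image `∂φ(K)` lies in `S`, and for every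
`δ > 0` the subdifferential images `∂φ_n(K)` eventually lie in the δ-neighborhood
`∪_{x ∈ ∂φ(K)} B_δ(x)`. -/
theorem statement14 {d : ℕ} (φn : ℕ → E d → ℝ)
    (hconv : ∀ n, ConvexOn ℝ Set.univ (φn n)) (hzero : ∀ n, φn n 0 = 0)
    (S : Set (E d)) (hS : IsCompact S) (hsub : ∀ n x, subdiffR (φn n) x ⊆ S)
    (K K' : Set (E d)) (hK : IsCompact K) (hK' : IsCompact K') (hKK' : K ⊆ interior K')
    (φ : E d → EReal) (hφ : ConvexE φ)
    (hfin : ∀ u ∈ K', φ u ≠ ⊤ ∧ φ u ≠ ⊥)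
    (hunif : ∀ ε > (0 : ℝ), ∃ N : ℕ, ∀ n ≥ N, ∀ u ∈ K', |φn n u - (φ u).toReal| ≤ ε) :
    ({ξ : E d | ∃ u ∈ K, ξ ∈ subdiffE φ u} ⊆ S) ∧
    (∀ δ > (0 : ℝ), ∃ n₀ : ℕ, ∀ n ≥ n₀,
      {ξ : E d | ∃ u ∈ K, ξ ∈ subdiffR (φn n) u} ⊆
        ⋃ x ∈ {ξ : E d | ∃ u ∈ K, ξ ∈ subdiffE φ u}, Metric.ball x δ) := by
  -- a uniform radius r with closedBall u r ⊆ K' for u ∈ K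
  obtain ⟨r, hr0, hrsub⟩ := hK.exists_cthickening_subset_open isOpen_interior hKK'
  have hball : ∀ u ∈ K, Metric.closedBall u r ⊆ K' := by
    intro u hu
    refine subset_trans ?_ (subset_trans hrsub interior_subset)
    exact Metric.closedBall_subset_cthickening hu r
  have hKsub : K ⊆ K' := subset_trans hKK' interior_subset
  -- Part 1
  have part1 : {ξ : E d | ∃ u ∈ K, ξ ∈ subdiffE φ u} ⊆ S := by
    rintro ξ ⟨u, hu, hξ⟩
    exact part1core φn hconv S hS hsub K' φ hfin hunif u r hr0 (hball u hu) ξ hξ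
  refine ⟨part1, ?_⟩
  -- Part 2
  intro δ hδ
  by_contra hcon
  push_neg at hcon
  choose f hf1 hf2 using hcon
  have hwit : ∀ k : ℕ, ∃ ξ : E d, ξ ∈ {ξ : E d | ∃ u ∈ K, ξ ∈ subdiffR (φn (f k)) u} ∧
      ξ ∉ ⋃ x ∈ {ξ : E d | ∃ u ∈ K, ξ ∈ subdiffE φ u}, Metric.ball x δ :=
    fun k => Set.not_subset.mp (hf2 k)
  choose ξ hmem hnot using hwit
  choose u huK hsd using hmem
  have hξS : ∀ k, ξ k ∈ S := fun k => hsub (f k) (u k) (hsd k)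
  -- compactness: extract convergent subsequence of (u k, ξ k)
  have hpmem : ∀ k, (u k, ξ k) ∈ K ×ˢ S := fun k => Set.mem_prod.mpr ⟨huK k, hξS k⟩
  obtain ⟨⟨ub, sb⟩, hpair, ψ, hψ, hψt⟩ := (hK.prod hS).tendsto_subseq hpmem
  have hubK : ub ∈ K := hpair.1
  have hsbS : sb ∈ S := hpair.2
  have hu_t : Tendsto (fun j => u (ψ j)) atTop (𝓝 ub) :=
    (continuous_fst.tendsto (ub, sb)).comp hψt
  have hξ_t : Tendsto (fun j => ξ (ψ j)) atTop (𝓝 sb) :=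
    (continuous_snd.tendsto (ub, sb)).comp hψt
  -- continuity of the limit function on K'
  set Ψ : E d → ℝ := fun x => (φ x).toReal with hΨdef
  have hunifT : TendstoUniformlyOn (fun m x => φn m x) Ψ atTop K' := by
    rw [Metric.tendstoUniformlyOn_iff]
    intro ε hε
    obtain ⟨N, hN⟩ := hunif (ε/2) (half_pos hε)
    filter_upwards [eventually_ge_atTop N] with m hm
    intro x hx
    have := hN m hm x hx
    rw [Real.dist_eq, abs_sub_comm]
    linarith [half_lt_self hε]
  have hΨcont : ContinuousOn Ψ K' :=
    hunifT.continuousOn (Eventually.of_forall fun m => (convexCont _ (hconv m)).continuousOn).frequently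
  -- the index f (ψ j) tends to infinity
  have hidx : ∀ j : ℕ, j ≤ f (ψ j) := fun j => le_trans (hψ.le_apply) (hf1 (ψ j))
  -- limit of φn (f (ψ j)) at a fixed point y ∈ K'
  have hpt : ∀ y ∈ K', Tendsto (fun j => φn (f (ψ j)) y) atTop (𝓝 (Ψ y)) := by
    intro y hy
    rw [Metric.tendsto_atTop]
    intro ε hε
    obtain ⟨N, hN⟩ := hunif (ε/2) (half_pos hε)
    refine ⟨N, fun j hj => ?_⟩
    have : |φn (f (ψ j)) y - Ψ y| ≤ ε/2 := hN _ (le_trans hj (hidx j)) y hy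
    rw [Real.dist_eq]
    linarith [half_lt_self hε]
  -- limit of φn (f (ψ j)) (u (ψ j))
  have hA1 : Tendsto (fun j => φn (f (ψ j)) (u (ψ j)) - Ψ (u (ψ j))) atTop (𝓝 0) := by
    rw [Metric.tendsto_atTop]
    intro ε hε
    obtain ⟨N, hN⟩ := hunif (ε/2) (half_pos hε)
    refine ⟨N, fun j hj => ?_⟩
    have : |φn (f (ψ j)) (u (ψ j)) - Ψ (u (ψ j))| ≤ ε/2 :=
      hN _ (le_trans hj (hidx j)) _ (hKsub (huK (ψ j)))
    rw [Real.dist_eq, sub_zero]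
    linarith [half_lt_self hε]
  have hA2 : Tendsto (fun j => Ψ (u (ψ j))) atTop (𝓝 (Ψ ub)) := by
    have hc : Tendsto Ψ (nhdsWithin ub K') (𝓝 (Ψ ub)) := hΨcont ub (hKsub hubK)
    apply hc.comp
    rw [tendsto_nhdsWithin_iff]
    exact ⟨hu_t, Eventually.of_forall fun j => hKsub (huK (ψ j))⟩
  have hA : Tendsto (fun j => φn (f (ψ j)) (u (ψ j))) atTop (𝓝 (Ψ ub)) := by
    have := hA1.add hA2
    rw [zero_add] at this
    convert this using 2 with j
    ring
  -- the limit point sb is a subgradient of φ at ub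
  have hsb : sb ∈ subdiffE φ ub := by
    apply localToGlobalE φ hφ ub r hr0
    · intro z hz
      exact hfin z (hball ub hubK (Metric.ball_subset_closedBall hz))
    · intro y hy
      have hyK' : y ∈ K' := hball ub hubK (Metric.ball_subset_closedBall hy)
      have hinner_t : Tendsto (fun j => ⟪ξ (ψ j), y - u (ψ j)⟫) atTop (𝓝 ⟪sb, y - ub⟫) :=
        hξ_t.inner (tendsto_const_nhds.sub hu_t)
      have hlhs := hA.add hinner_t
      have hrhs := hpt y hyK'
      exact le_of_tendsto_of_tendsto' hlhs hrhs (fun j => hsd (ψ j) y)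
  -- contradiction
  have hmemU : ∀ w ∈ Metric.ball sb δ,
      w ∈ ⋃ x ∈ {ξ : E d | ∃ u ∈ K, ξ ∈ subdiffE φ u}, Metric.ball x δ := by
    intro w hw
    exact Set.mem_biUnion ⟨ub, hubK, hsb⟩ hw
  have : ∀ᶠ j in atTop, ξ (ψ j) ∈ Metric.ball sb δ :=
    hξ_t (Metric.ball_mem_nhds sb hδ)
  obtain ⟨j, hj⟩ := this.exists
  exact hnot (ψ j) (hmemU _ hj)
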